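/- For every decorated tree τ, Ψ(τ) = C(β(τ))·z^{β(τ)} in ℝ[coord], where z^β := Π_{ι ∈ coord} z_ι^{β(ι)} and C(β) := Π_{(l,k)} (k! / Π_{m ∈ ℕ^d} (m!)^{k(m)})^{β(l,k)} · Π_{n ∈ ℕ^d} (n!)^{β(n)}. -/

import Mathlib

open scoped Classical

noncomputable section

/-- The set of `d`-tuples of natural numbers, `ℕ^d`. -/
abbrev Nd (d : ℕ) : Type := Fin d → ℕ

/-- Multi-indices over `ℕ^d`. -/
abbrev MNd (d : ℕ) : Type := Nd d →₀ ℕ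

/-- The coordinate set `coord = (𝔏 × M(ℕ^d)) ⊔ ℕ^d`, with `𝔏 = 𝔏⁻ ∪ {0}`
modelled as `Option Lm` (`none` playing the role of `0`). -/
abbrev Coord (Lm : Type) (d : ℕ) : Type := (Option Lm × MNd d) ⊕ Nd d

/-- Multi-indices over `coord`. -/
abbrev MCoord (Lm : Type) (d : ℕ) : Type := Coord Lm d →₀ ℕ

/-- Decorated trees: `X n` for `n ∈ ℕ^d`, and `node l r ms ts` representing
`Ξ_l⟨(ms 0, ts 0), …, (ms (r-1), ts (r-1))⟩`. -/
inductive DTree (Lm : Type) (d : ℕ) : Type where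
  | X : Nd d → DTree Lm d
  | node : Option Lm → (r : ℕ) → (Fin r → Nd d) → (Fin r → DTree Lm d) → DTree Lm d

variable {Lm : Type} {d : ℕ}

/-- `n!` for `n ∈ ℕ^d`. -/
def factNd (n : Nd d) : ℕ := ∏ i, (n i).factorial

/-- `k!` for `k ∈ M(ℕ^d)`. -/
def factM (k : MNd d) : ℕ := k.prod fun _ v => v.factorial

/-- The multi-index `k = Σ_j e_{m_j}` of outgoing edge decorations. -/
def kOf {r : ℕ} (ms : Fin r → Nd d) : MNd d := ∑ j, Finsupp.single (ms j) 1

/-- The map `Ψ` on decorated trees. -/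
def Psi : DTree Lm d → MvPolynomial (Coord Lm d) ℝ :=
  DTree.rec (motive := fun _ => MvPolynomial (Coord Lm d) ℝ)
    (fun n => MvPolynomial.C (factNd n : ℝ) * MvPolynomial.X (Sum.inr n))
    (fun l r ms _ts ih =>
      MvPolynomial.C (factM (kOf ms) : ℝ) * MvPolynomial.X (Sum.inl (l, kOf ms)) *
        ∏ j : Fin r, (MvPolynomial.C (1 / (factNd (ms j) : ℝ)) * ih j))

/-- The multi-index `β(τ)` of a decorated tree. -/
def betaOf : DTree Lm d → MCoord Lm d :=
  DTree.rec (motive := fun _ => MCoord Lm d)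
    (fun n => Finsupp.single (Sum.inr n) 1)
    (fun l r ms _ts ih =>
      Finsupp.single (Sum.inl (l, kOf ms)) 1 + ∑ j : Fin r, ih j)

/-- The combinatorial coefficient `C(β)`. -/
def Ccoef (β : MCoord Lm d) : ℝ :=
  β.prod fun x v =>
    match x with
    | Sum.inl (_, k) =>
        ((factM k : ℝ) / (k.prod fun m vm => (factNd m : ℝ) ^ vm)) ^ v
    | Sum.inr n => ((factNd n : ℝ)) ^ v

def gfun (x : Coord Lm d) : ℝ :=
  match x with
  | Sum.inl (_, k) => (factM k : ℝ) / (k.prod fun m vm => (factNd m : ℝ) ^ vm)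
  | Sum.inr n => (factNd n : ℝ)

lemma Ccoef_eq (β : MCoord Lm d) : Ccoef β = β.prod fun x v => gfun x ^ v := by
  refine Finset.prod_congr rfl fun x _ => ?_
  rcases x with ⟨l, k⟩ | n <;> rfl

lemma Ccoef_zero : Ccoef (0 : MCoord Lm d) = 1 := by
  simp [Ccoef]

lemma Ccoef_add (a b : MCoord Lm d) : Ccoef (a + b) = Ccoef a * Ccoef b := by
  simp only [Ccoef_eq]
  exact Finsupp.prod_add_index' (fun x => pow_zero _) (fun x v w => pow_add _ _ _)

lemma Ccoef_single (x : Coord Lm d) : Ccoef (Finsupp.single x 1) = gfun x := by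
  rw [Ccoef_eq]
  exact (Finsupp.prod_single_index (h := fun x v => gfun x ^ v) (pow_zero _)).trans (pow_one _)

lemma Ccoef_sum {ι : Type*} (s : Finset ι) (f : ι → MCoord Lm d) :
    Ccoef (∑ j ∈ s, f j) = ∏ j ∈ s, Ccoef (f j) := by
  classical
  induction s using Finset.induction with
  | empty => simp [Ccoef_zero]
  | insert _ _ h ih => rw [Finset.sum_insert h, Finset.prod_insert h, Ccoef_add, ih]

lemma prod_pow_kOf {r : ℕ} (ms : Fin r → Nd d) (g : Nd d → ℝ) :
    ((kOf ms).prod fun m v => g m ^ v) = ∏ j, g (ms j) := by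
  unfold kOf
  classical
  induction (Finset.univ : Finset (Fin r)) using Finset.induction with
  | empty => simp
  | insert _ _ h ih =>
      rw [Finset.sum_insert h, Finset.prod_insert h,
        Finsupp.prod_add_index' (fun x => pow_zero _) (fun x v w => pow_add _ _ _), ih]
      congr 1
      exact (Finsupp.prod_single_index (h := fun m v => g m ^ v) (pow_zero _)).trans (pow_one _)

lemma prod_monomial {ι : Type*} (s : Finset ι) (β : ι → MCoord Lm d) (b : ι → ℝ) :
    (∏ j ∈ s, MvPolynomial.monomial (β j) (b j)) =
      MvPolynomial.monomial (∑ j ∈ s, β j) (∏ j ∈ s, b j) := by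
  classical
  induction s using Finset.induction with
  | empty => simp
  | insert _ _ h ih =>
      rw [Finset.prod_insert h, Finset.prod_insert h, Finset.sum_insert h, ih,
        MvPolynomial.monomial_mul]

lemma monomial_of (β : MCoord Lm d) :
    (MvPolynomial.C (Ccoef β) * β.prod fun ι v => MvPolynomial.X ι ^ v :
      MvPolynomial (Coord Lm d) ℝ) = MvPolynomial.monomial β (Ccoef β) := by
  rw [MvPolynomial.monomial_eq]

lemma Psi_X (n : Nd d) : Psi (DTree.X n : DTree Lm d) =
    MvPolynomial.C (factNd n : ℝ) * MvPolynomial.X (Sum.inr n) := rfl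

lemma Psi_node (l : Option Lm) (r : ℕ) (ms : Fin r → Nd d) (ts : Fin r → DTree Lm d) :
    Psi (DTree.node l r ms ts) =
      MvPolynomial.C (factM (kOf ms) : ℝ) * MvPolynomial.X (Sum.inl (l, kOf ms)) *
        ∏ j : Fin r, (MvPolynomial.C (1 / (factNd (ms j) : ℝ)) * Psi (ts j)) := rfl

lemma betaOf_X (n : Nd d) : betaOf (DTree.X n : DTree Lm d) =
    Finsupp.single (Sum.inr n) 1 := rfl

lemma betaOf_node (l : Option Lm) (r : ℕ) (ms : Fin r → Nd d) (ts : Fin r → DTree Lm d) :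
    betaOf (DTree.node l r ms ts) =
      Finsupp.single (Sum.inl (l, kOf ms)) 1 + ∑ j : Fin r, betaOf (ts j) := rfl

theorem stmt18 {Lm : Type} [Fintype Lm] {d : ℕ} (hd : 1 ≤ d) (τ : DTree Lm d) :
    Psi τ = MvPolynomial.C (Ccoef (betaOf τ)) *
      (betaOf τ).prod fun ι v => MvPolynomial.X ι ^ v := by
  induction τ with
  | X n =>
      rw [monomial_of, Psi_X, betaOf_X, Ccoef_single, MvPolynomial.X,
        MvPolynomial.C_mul_monomial, mul_one]
      rfl
  | node l r ms ts ih =>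
      rw [monomial_of, Psi_node, betaOf_node]
      have hih : ∀ j, Psi (ts j) = MvPolynomial.monomial (betaOf (ts j))
          (Ccoef (betaOf (ts j))) := fun j => by rw [ih j, monomial_of]
      simp only [hih, MvPolynomial.C_mul_monomial]
      rw [prod_monomial, MvPolynomial.X, MvPolynomial.C_mul_monomial,
        MvPolynomial.monomial_mul]
      congr 1
      rw [Ccoef_add, Ccoef_single, Ccoef_sum]
      have hg : gfun (Sum.inl (l, kOf ms) : Coord Lm d)
          = (factM (kOf ms) : ℝ) / ∏ j, (factNd (ms j) : ℝ) := by
        show (factM (kOf ms) : ℝ) / ((kOf ms).prod fun m vm => (factNd m : ℝ) ^ vm) = _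
        rw [prod_pow_kOf]
      rw [hg, Finset.prod_mul_distrib]
      simp only [one_div, div_eq_mul_inv, one_mul, mul_one]
      rw [Finset.prod_inv_distrib]
      ring


end
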